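/- Consider the regularized equilibrium of a one-shot zero-sum game with KL regularization: if a joint policy (π0*, π1*) is a saddle point of the objective J_α(π0, π1) = u(π0, π1) − α KL(π0, ρ0) + α KL(π1, ρ1), where u is bilinear in the mixed strategies over finite action sets, ρ0, ρ1 have all probabilities at least ε ∈ (0,1], α > 0, then the exploitability of (π0*, π1*) with respect to the unregularized objective u is at most α |log ε|. -/

import Mathlib

open Finset

/-- KL divergence between two pmfs on a finite set. -/
noncomputable def KLdiv {A : Type*} [Fintype A] (p q : A → ℝ) : ℝ :=
  ∑ a, p a * Real.log (p a / q a)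

/-- Bilinear payoff of a matrix game in mixed strategies. -/
noncomputable def matPay {A0 A1 : Type*} [Fintype A0] [Fintype A1]
    (M : A0 → A1 → ℝ) (x : A0 → ℝ) (y : A1 → ℝ) : ℝ :=
  ∑ a, ∑ b, x a * y b * M a b

lemma KL_nonneg {A : Type*} [Fintype A] {p q : A → ℝ}
    (hp : p ∈ stdSimplex ℝ A) (hq : q ∈ stdSimplex ℝ A) (hqpos : ∀ a, 0 < q a) :
    0 ≤ KLdiv p q := by
  have key : ∀ a, p a - q a ≤ p a * Real.log (p a / q a) := by
    intro a
    rcases eq_or_lt_of_le (hp.1 a) with h | h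
    · simp [← h]
      exact (hqpos a).le
    · have hlog : Real.log (q a / p a) ≤ q a / p a - 1 :=
        Real.log_le_sub_one_of_pos (div_pos (hqpos a) h)
      have : Real.log (p a / q a) = -Real.log (q a / p a) := by
        rw [← Real.log_inv, inv_div]
      rw [this]
      have := mul_le_mul_of_nonneg_left (neg_le_neg hlog) h.le
      calc p a - q a = p a * -(q a / p a - 1) := by field_simp; ring
        _ ≤ p a * -Real.log (q a / p a) := this
  have : ∑ a, (p a - q a) ≤ KLdiv p q := Finset.sum_le_sum fun a _ => key a
  simpa [Finset.sum_sub_distrib, hp.2, hq.2] using this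

lemma KL_le {A : Type*} [Fintype A] {p q : A → ℝ} {ε : ℝ}
    (hp : p ∈ stdSimplex ℝ A) (hε0 : 0 < ε) (hε1 : ε ≤ 1)
    (hqε : ∀ a, ε ≤ q a) :
    KLdiv p q ≤ |Real.log ε| := by
  have habs : |Real.log ε| = -Real.log ε := by
    rw [abs_of_nonpos (Real.log_nonpos hε0.le hε1)]
  have key : ∀ a, p a * Real.log (p a / q a) ≤ p a * |Real.log ε| := by
    intro a
    rcases eq_or_lt_of_le (hp.1 a) with h | h
    · simp [← h]
    · have hp1 : p a ≤ 1 := by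
        rw [← hp.2]
        exact Finset.single_le_sum (fun i _ => hp.1 i) (Finset.mem_univ a)
      have hq : 0 < q a := lt_of_lt_of_le hε0 (hqε a)
      have : p a / q a ≤ 1 / ε := by
        apply div_le_div₀ zero_le_one hp1 hε0 (hqε a)
      have hlog : Real.log (p a / q a) ≤ |Real.log ε| := by
        calc Real.log (p a / q a) ≤ Real.log (1 / ε) :=
              Real.log_le_log (div_pos h hq) this
          _ = -Real.log ε := by rw [Real.log_div one_ne_zero hε0.ne', Real.log_one]; ring
          _ = |Real.log ε| := habs.symm
      exact mul_le_mul_of_nonneg_left hlog h.le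
  calc KLdiv p q ≤ ∑ a, p a * |Real.log ε| := Finset.sum_le_sum fun a _ => key a
    _ = |Real.log ε| := by rw [← Finset.sum_mul, hp.2, one_mul]

theorem stmt4 {A0 A1 : Type*} [Fintype A0] [Fintype A1] [Nonempty A0] [Nonempty A1]
    (M : A0 → A1 → ℝ) (ρ0 : A0 → ℝ) (ρ1 : A1 → ℝ) (α ε : ℝ)
    (hα : 0 < α) (hε0 : 0 < ε) (hε1 : ε ≤ 1)
    (hρ0 : ρ0 ∈ stdSimplex ℝ A0) (hρ1 : ρ1 ∈ stdSimplex ℝ A1)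
    (hρ0ε : ∀ a, ε ≤ ρ0 a) (hρ1ε : ∀ b, ε ≤ ρ1 b)
    (π0s : A0 → ℝ) (π1s : A1 → ℝ)
    (hπ0s : π0s ∈ stdSimplex ℝ A0) (hπ1s : π1s ∈ stdSimplex ℝ A1)
    (hsaddle : ∀ x ∈ stdSimplex ℝ A0, ∀ y ∈ stdSimplex ℝ A1,
      matPay M x π1s - α * KLdiv x ρ0 + α * KLdiv π1s ρ1 ≤
        matPay M π0s π1s - α * KLdiv π0s ρ0 + α * KLdiv π1s ρ1 ∧
      matPay M π0s π1s - α * KLdiv π0s ρ0 + α * KLdiv π1s ρ1 ≤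
        matPay M π0s y - α * KLdiv π0s ρ0 + α * KLdiv y ρ1) :
    ∀ x ∈ stdSimplex ℝ A0, ∀ y ∈ stdSimplex ℝ A1,
      (matPay M x π1s - matPay M π0s y) / 2 ≤ α * |Real.log ε| := by
  intro x hx y hy
  have hρ0pos : ∀ a, 0 < ρ0 a := fun a => lt_of_lt_of_le hε0 (hρ0ε a)
  have hρ1pos : ∀ b, 0 < ρ1 b := fun b => lt_of_lt_of_le hε0 (hρ1ε b)
  obtain ⟨h1, _⟩ := hsaddle x hx y hy
  obtain ⟨_, h2⟩ := hsaddle x hx y hy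
  have hKLx : KLdiv x ρ0 ≤ |Real.log ε| := KL_le hx hε0 hε1 hρ0ε
  have hKLy : KLdiv y ρ1 ≤ |Real.log ε| := KL_le hy hε0 hε1 hρ1ε
  have hKL0 : 0 ≤ KLdiv π0s ρ0 := KL_nonneg hπ0s hρ0 hρ0pos
  have hKL1 : 0 ≤ KLdiv π1s ρ1 := KL_nonneg hπ1s hρ1 hρ1pos
  nlinarith [mul_le_mul_of_nonneg_left hKLx hα.le,
    mul_le_mul_of_nonneg_left hKLy hα.le,
    mul_nonneg hα.le hKL0, mul_nonneg hα.le hKL1]
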